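/- Let Λ be a continuous probability density on [0,1] bounded away from 0, and let V: ℝ → ℝ be bounded below with ∫ exp(-V(ε)) dε = 1. Define Z_n = ∫₀¹∫₀¹ √(Λ(x)Λ(y)) exp(-V(n(x-y))) dx dy. Then n · Z_n → 1 as n → ∞. -/

import Mathlib

open MeasureTheory Real Filter

/-- Let `Λ` be a continuous probability density on `[0,1]` bounded away from `0`, and let
`V : ℝ → ℝ` be measurable, symmetric and bounded below, with `∫ exp(-V ε) dε = 1`.
Define `Z n = ∫₀¹∫₀¹ √(Λ x * Λ y) exp(-V (n (x - y))) dx dy`. Then `n * Z n → 1`. -/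
theorem partition_function_limit
    (Λ V : ℝ → ℝ) (Λmin : ℝ) (hΛmin : 0 < Λmin)
    (hΛcont : ContinuousOn Λ (Set.Icc 0 1))
    (hΛlb : ∀ x ∈ Set.Icc (0:ℝ) 1, Λmin ≤ Λ x)
    (hΛprob : ∫ x in Set.Icc (0:ℝ) 1, Λ x = 1)
    (hVmeas : Measurable V)
    (hVbdd : ∃ c : ℝ, ∀ ε : ℝ, c ≤ V ε)
    (hVsym : ∀ ε : ℝ, V ε = V (-ε))
    (hVprob : ∫ ε : ℝ, Real.exp (-V ε) = 1)
    (Z : ℕ → ℝ)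
    (hZ : ∀ n : ℕ, Z n =
      ∫ x in Set.Icc (0:ℝ) 1, ∫ y in Set.Icc (0:ℝ) 1,
        Real.sqrt (Λ x * Λ y) * Real.exp (-V ((n : ℝ) * (x - y)))) :
    Tendsto (fun n : ℕ => (n : ℝ) * Z n) atTop (nhds 1) := by
  classical
  -- a continuous extension of `Λ` to all of `ℝ`
  set proj : ℝ → ℝ := fun x => max 0 (min x 1) with hprojdef
  have hprojmem : ∀ x : ℝ, proj x ∈ Set.Icc (0:ℝ) 1 := by
    intro x
    exact ⟨le_max_left _ _, max_le (by norm_num) (min_le_right _ _)⟩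
  have hprojeq : ∀ x ∈ Set.Icc (0:ℝ) 1, proj x = x := by
    intro x hx
    simp only [hprojdef]
    rw [min_eq_left hx.2, max_eq_right hx.1]
  set Λ' : ℝ → ℝ := fun x => Λ (proj x) with hΛ'def
  have hΛ'cont : Continuous Λ' := by
    refine hΛcont.comp_continuous ?_ hprojmem
    exact continuous_const.max (continuous_id.min continuous_const)
  have hΛ'eq : ∀ x ∈ Set.Icc (0:ℝ) 1, Λ' x = Λ x := by
    intro x hx
    simp only [hΛ'def]
    rw [hprojeq x hx]
  have hΛ'lb : ∀ x, Λmin ≤ Λ' x := fun x => hΛlb _ (hprojmem x)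
  have hΛ'pos : ∀ x, 0 < Λ' x := fun x => lt_of_lt_of_le hΛmin (hΛ'lb x)
  -- a uniform bound on `Λ'`
  obtain ⟨M, hM⟩ := isCompact_Icc.exists_bound_of_continuousOn hΛcont
  have hM' : ∀ x, Λ' x ≤ M := fun x => le_trans (le_abs_self _) (hM _ (hprojmem x))
  have hM0 : 0 < M := lt_of_lt_of_le (hΛ'pos 0) (hM' 0)
  -- the density `q`
  set q : ℝ → ℝ := fun u => Real.exp (-V u) with hqdef
  have hqmeas : Measurable q := hVmeas.neg.exp
  have hqpos : ∀ u, 0 < q u := fun u => Real.exp_pos _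
  have hqint : Integrable q := by
    by_contra h
    rw [integral_undef h] at hVprob
    exact one_ne_zero hVprob.symm
  set μ : Measure ℝ := volume.restrict (Set.Icc (0:ℝ) 1) with hμdef
  haveI : IsFiniteMeasure μ := by
    constructor
    rw [hμdef, Measure.restrict_apply_univ]
    simp [Real.volume_Icc]
  -- the rescaled integrand
  set G : ℕ → ℝ × ℝ → ℝ := fun n p =>
    (Set.Ioc ((n:ℝ) * p.1 - n) ((n:ℝ) * p.1)).indicator
      (fun u => Real.sqrt (Λ' p.1 * Λ' (p.1 - u / n)) * q u) p.2 with hGdef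
  have hGmeas : ∀ n : ℕ, Measurable (G n) := by
    intro n
    have hG' : G n = Set.indicator {p : ℝ × ℝ | (n:ℝ) * p.1 - n < p.2 ∧ p.2 ≤ (n:ℝ) * p.1}
        (fun p => Real.sqrt (Λ' p.1 * Λ' (p.1 - p.2 / n)) * q p.2) := by
      funext p
      simp only [hGdef, Set.indicator_apply, Set.mem_Ioc, Set.mem_setOf_eq]
    rw [hG']
    refine Measurable.indicator ?_ ?_
    · exact (((hΛ'cont.comp continuous_fst).mul
        (hΛ'cont.comp (continuous_fst.sub (continuous_snd.div_const _)))).sqrt.measurable).mul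
        (hqmeas.comp measurable_snd)
    · exact (measurableSet_lt ((measurable_fst.const_mul _).sub measurable_const)
        measurable_snd).inter
        (measurableSet_le measurable_snd (measurable_fst.const_mul _))
  -- the dominating function
  set bound : ℝ × ℝ → ℝ := fun p => M * q p.2 with hbounddef
  have hbound_int : Integrable bound (μ.prod volume) := by
    have hb : bound = fun p : ℝ × ℝ => (fun _ : ℝ => M) p.1 * q p.2 := rfl
    rw [hb]
    exact (integrable_const M).mul_prod hqint
  have hGle : ∀ n p, ‖G n p‖ ≤ bound p := by
    intro n p
    rw [Real.norm_eq_abs]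
    simp only [hGdef]
    rw [Set.indicator_apply]
    split_ifs with h
    · rw [abs_of_nonneg (mul_nonneg (Real.sqrt_nonneg _) (le_of_lt (hqpos _)))]
      refine mul_le_mul_of_nonneg_right ?_ (le_of_lt (hqpos _))
      calc Real.sqrt (Λ' p.1 * Λ' (p.1 - p.2 / n)) ≤ Real.sqrt (M * M) :=
            Real.sqrt_le_sqrt (mul_le_mul (hM' _) (hM' _) (le_of_lt (hΛ'pos _)) (le_of_lt hM0))
        _ = M := Real.sqrt_mul_self (le_of_lt hM0)
    · rw [abs_zero]
      have := hqpos p.2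
      positivity
  have hG_int : ∀ n, Integrable (G n) (μ.prod volume) := fun n =>
    hbound_int.mono' (hGmeas n).aestronglyMeasurable (Filter.Eventually.of_forall (hGle n))
  -- almost every point has first coordinate in the open interval
  have hIoo : ∀ᵐ p ∂(μ.prod (volume : Measure ℝ)), p.1 ∈ Set.Ioo (0:ℝ) 1 := by
    rw [ae_iff]
    have hnull : (μ.prod volume) ((Set.Ioo (0:ℝ) 1)ᶜ ×ˢ (Set.univ : Set ℝ)) = 0 := by
      rw [Measure.prod_prod]
      have hμ0 : μ (Set.Ioo (0:ℝ) 1)ᶜ = 0 := by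
        rw [hμdef, Measure.restrict_apply measurableSet_Ioo.compl]
        have heq : (Set.Ioo (0:ℝ) 1)ᶜ ∩ Set.Icc 0 1 = ({0, 1} : Set ℝ) := by
          rw [Set.inter_comm, ← Set.diff_eq, Set.Icc_diff_Ioo_same zero_le_one]
        rw [heq]
        exact Set.Countable.measure_zero (((Set.finite_singleton 1).insert 0).countable) _
      rw [hμ0, zero_mul]
    refine measure_mono_null (fun p hp => ?_) hnull
    exact ⟨hp, Set.mem_univ _⟩
  -- pointwise convergence
  have hGtendsto : ∀ᵐ p ∂(μ.prod volume),
      Tendsto (fun n => G n p) atTop (nhds (Λ' p.1 * q p.2)) := by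
    filter_upwards [hIoo] with p hp
    obtain ⟨x, u⟩ := p
    simp only [Set.mem_Ioo] at hp
    have h1 : Tendsto (fun n : ℕ => (n:ℝ) * x) atTop atTop :=
      tendsto_natCast_atTop_atTop.atTop_mul_const hp.1
    have h2 : Tendsto (fun n : ℕ => (n:ℝ) * x - n) atTop atBot := by
      have heq : (fun n : ℕ => (n:ℝ) * x - n) = fun n : ℕ => (n:ℝ) * (x - 1) := by
        funext n; ring
      rw [heq]
      exact tendsto_natCast_atTop_atTop.atTop_mul_const_of_neg' (by linarith [hp.2])
    have hev : ∀ᶠ n : ℕ in atTop, u ∈ Set.Ioc ((n:ℝ) * x - n) ((n:ℝ) * x) := by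
      filter_upwards [h1.eventually_ge_atTop u, h2.eventually_lt_atBot u] with n hn1 hn2
      exact ⟨hn2, hn1⟩
    have hlim : Tendsto (fun n : ℕ => Real.sqrt (Λ' x * Λ' (x - u / n)) * q u) atTop
        (nhds (Λ' x * q u)) := by
      have h3 : Tendsto (fun n : ℕ => x - u / n) atTop (nhds x) := by
        have h4 := tendsto_const_div_atTop_nhds_zero_nat u
        simpa using tendsto_const_nhds.sub h4
      have hcont : Continuous (fun t : ℝ => Real.sqrt (Λ' x * Λ' t) * q u) :=
        ((continuous_const.mul hΛ'cont).sqrt).mul continuous_const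
      have h5 := (hcont.tendsto x).comp h3
      simpa [Function.comp_def, Real.sqrt_mul_self (le_of_lt (hΛ'pos x))] using h5
    refine hlim.congr' ?_
    filter_upwards [hev] with n hn
    simp only [hGdef]
    rw [Set.indicator_of_mem hn]
  -- dominated convergence
  have hmain : Tendsto (fun n : ℕ => ∫ p, G n p ∂(μ.prod volume)) atTop
      (nhds (∫ p : ℝ × ℝ, Λ' p.1 * q p.2 ∂(μ.prod volume))) :=
    tendsto_integral_of_dominated_convergence bound
      (fun n => (hGmeas n).aestronglyMeasurable) hbound_int
      (fun n => Filter.Eventually.of_forall (hGle n)) hGtendsto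
  have hq1 : (∫ y : ℝ, q y) = 1 := hVprob
  have hΛ'prob : (∫ x : ℝ, Λ' x ∂μ) = 1 := by
    rw [hμdef] at hΛprob ⊢
    exact (setIntegral_congr_fun measurableSet_Icc (fun x hx => hΛ'eq x hx)).trans hΛprob
  have hlimval : (∫ p : ℝ × ℝ, Λ' p.1 * q p.2 ∂(μ.prod volume)) = 1 := by
    rw [integral_prod_mul, hq1, mul_one]
    exact hΛ'prob
  -- identification of `n * Z n` with the product integral, for `n ≥ 1`
  have hfinal : ∀ᶠ n : ℕ in atTop, (n:ℝ) * Z n = ∫ p, G n p ∂(μ.prod volume) := by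
    filter_upwards [eventually_ge_atTop 1] with n hn
    have hn0 : (0:ℝ) < n := by exact_mod_cast hn
    have hnne : (n:ℝ) ≠ 0 := ne_of_gt hn0
    have hZ' : Z n = ∫ x in Set.Icc (0:ℝ) 1, ∫ y in Set.Icc (0:ℝ) 1,
        Real.sqrt (Λ' x * Λ' y) * q ((n:ℝ) * (x - y)) := by
      rw [hZ n]
      refine setIntegral_congr_fun measurableSet_Icc (fun x hx => ?_)
      refine setIntegral_congr_fun measurableSet_Icc (fun y hy => ?_)
      rw [hΛ'eq x hx, hΛ'eq y hy]
    have hinner : ∀ x : ℝ, ((n:ℝ) * ∫ y in Set.Icc (0:ℝ) 1,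
        Real.sqrt (Λ' x * Λ' y) * q ((n:ℝ) * (x - y))) = ∫ u, G n (x, u) := by
      intro x
      have hstep1 : (∫ y in Set.Icc (0:ℝ) 1, Real.sqrt (Λ' x * Λ' y) * q ((n:ℝ) * (x - y)))
          = ∫ y in (0:ℝ)..1,
              (fun u => Real.sqrt (Λ' x * Λ' (x - u / n)) * q u) ((n:ℝ) * x - (n:ℝ) * y) := by
        rw [integral_Icc_eq_integral_Ioc, ← intervalIntegral.integral_of_le zero_le_one]
        refine intervalIntegral.integral_congr (fun y _ => ?_)
        have harg : (n:ℝ) * x - (n:ℝ) * y = (n:ℝ) * (x - y) := by ring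
        rw [harg]
        congr 3
        rw [mul_div_cancel_left₀ _ hnne, sub_sub_cancel]
      rw [hstep1,
        intervalIntegral.integral_comp_sub_mul
          (fun u => Real.sqrt (Λ' x * Λ' (x - u / n)) * q u) hnne ((n:ℝ) * x),
        smul_eq_mul, ← mul_assoc, mul_inv_cancel₀ hnne, one_mul,
        show (n:ℝ) * x - (n:ℝ) * 1 = (n:ℝ) * x - n by ring,
        show (n:ℝ) * x - (n:ℝ) * 0 = (n:ℝ) * x by ring,
        intervalIntegral.integral_of_le (sub_le_self _ hn0.le),
        ← integral_indicator measurableSet_Ioc]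
    have hfub : Function.uncurry (fun x u => G n (x, u)) = G n := by
      funext p
      rfl
    calc (n:ℝ) * Z n
        = ∫ x in Set.Icc (0:ℝ) 1, ((n:ℝ) * ∫ y in Set.Icc (0:ℝ) 1,
            Real.sqrt (Λ' x * Λ' y) * q ((n:ℝ) * (x - y))) := by
          rw [hZ', integral_const_mul]
      _ = ∫ x in Set.Icc (0:ℝ) 1, ∫ u, G n (x, u) :=
          setIntegral_congr_fun measurableSet_Icc (fun x _ => hinner x)
      _ = ∫ p, G n p ∂(μ.prod volume) := by
          rw [MeasureTheory.integral_integral (f := fun x u => G n (x, u)) (hfub ▸ hG_int n)]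
  rw [hlimval] at hmain
  exact hmain.congr' (hfinal.mono fun n hn => hn.symm)
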